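/- Multivariate integration by parts (Theorem A.1 of the paper). Let μ and ν be finite signed Borel measures on the box [a,b] ⊂ ℝ^d and set f = f_μ and g = f_ν. Then ∫_{(a,b]} f dν = Σ_{(I₁,I₂,I₃)} (−1)^{|I₁|+|I₂|} ∫_{(a_{I₁}, b_{I₁}]} g(x_{I₁}−; a_{I₂} : b_{I₃}) dμ_{I₁, a_{I₂}:b_{I₃}}(x_{I₁}), where the sum runs over all ordered triples (I₁, I₂, I₃) of pairwise disjoint subsets of {1,…,d} with I₁ ∪ I₂ ∪ I₃ = {1,…,d}; here a_{I₂} : b_{I₃} denotes any point c ∈ [a,b] with c_j = a_j for j ∈ I₂ and c_j = b_j for j ∈ I₃ (only coordinates outside I₁ matter), (a_{I₁}, b_{I₁}] = ∏_{j∈I₁} (a_j, b_j], and for I₁ = ∅ the corresponding term is interpreted as (−1)^{|I₂|} f(a_{I₂} : b_{I₃}) · g(a_{I₂} : b_{I₃}). -/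

import Mathlib

open MeasureTheory Set

/-- Integral of a bounded Borel function against a finite signed measure, over a set,
defined via the Jordan decomposition. -/
noncomputable def sInt {α : Type*} [MeasurableSpace α]
    (lam : MeasureTheory.SignedMeasure α) (s : Set α) (h : α → ℝ) : ℝ :=
  (∫ x in s, h x ∂lam.toJordanDecomposition.posPart) -
    ∫ x in s, h x ∂lam.toJordanDecomposition.negPart

section Aux

/-- algebraic expansion -/
lemma ibp_expand {ι : Type*} [Fintype ι] [DecidableEq ι] (u v : ι → ℝ) :
    (∏ j, (1 - u j - v j)) =
      ∑ I₁ : Finset ι, ∑ I₂ ∈ I₁ᶜ.powerset,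
        (-1 : ℝ) ^ (I₁.card + I₂.card) * ((∏ j ∈ I₁, u j) * ∏ j ∈ I₂, v j) := by
  have hneg : ∀ (s : Finset ι) (f : ι → ℝ),
      ∏ j ∈ s, (-f j) = (-1) ^ s.card * ∏ j ∈ s, f j := by
    intro s f
    rw [← Finset.prod_const, ← Finset.prod_mul_distrib]
    simp
  have h1 : ∀ j, (1 : ℝ) - u j - v j = (-u j) + ((-v j) + 1) := fun j => by ring
  simp_rw [h1]
  rw [Finset.prod_add, Finset.powerset_univ]
  refine Finset.sum_congr rfl fun I₁ _ => ?_
  rw [← Finset.compl_eq_univ_sdiff, Finset.prod_add, Finset.mul_sum]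
  refine Finset.sum_congr rfl fun I₂ hI₂ => ?_
  rw [hneg, hneg]
  simp only [Finset.prod_const_one, mul_one, pow_add]
  ring

variable {α : Type*} [MeasurableSpace α]

lemma prod_apply_toReal (σ ρ : Measure α) [IsFiniteMeasure σ] [IsFiniteMeasure ρ]
    {C : Set (α × α)} (hC : MeasurableSet C) :
    ∫ x, (ρ (Prod.mk x ⁻¹' C)).toReal ∂σ = ((σ.prod ρ) C).toReal := by
  rw [Measure.prod_apply hC]
  exact integral_toReal (measurable_measure_prodMk_left hC).aemeasurable
    (Filter.Eventually.of_forall fun x => measure_lt_top ρ _)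

lemma integ_slice (σ ρ : Measure α) [IsFiniteMeasure σ] [IsFiniteMeasure ρ]
    {C : Set (α × α)} (hC : MeasurableSet C) :
    Integrable (fun x => (ρ (Prod.mk x ⁻¹' C)).toReal) σ :=
  ⟨((measurable_measure_prodMk_left hC).ennreal_toReal).aestronglyMeasurable,
   HasFiniteIntegral.of_bounded (C := (ρ Set.univ).toReal) (Filter.Eventually.of_forall
     fun x => by
       rw [Real.norm_eq_abs, abs_of_nonneg ENNReal.toReal_nonneg]
       exact ENNReal.toReal_mono (measure_ne_top ρ _) (measure_mono (Set.subset_univ _)))⟩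

/-- apply formula for signed measures via Jordan decomposition -/
lemma signed_apply_jordan (μ : SignedMeasure α) {s : Set α} (hs : MeasurableSet s) :
    μ s = (μ.toJordanDecomposition.posPart s).toReal
        - (μ.toJordanDecomposition.negPart s).toReal := by
  conv_lhs => rw [← μ.toSignedMeasure_toJordanDecomposition]
  rw [JordanDecomposition.toSignedMeasure, VectorMeasure.sub_apply,
    Measure.toSignedMeasure_apply_measurable hs, Measure.toSignedMeasure_apply_measurable hs]
  rfl

/-- both Jordan parts vanish on null measurable sets of a signed measure -/
lemma jordan_parts_null (μ : SignedMeasure α) {U : Set α} (hU : MeasurableSet U)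
    (h : ∀ E, MeasurableSet E → E ⊆ U → μ E = 0) :
    μ.toJordanDecomposition.posPart U = 0 ∧ μ.toJordanDecomposition.negPart U = 0 := by
  obtain ⟨u, hum, h1, h2⟩ := μ.toJordanDecomposition.mutuallySingular
  set P := μ.toJordanDecomposition.posPart
  set N := μ.toJordanDecomposition.negPart
  have hUu : MeasurableSet (U ∩ u) := hU.inter hum
  have hUd : MeasurableSet (U \ u) := hU.diff hum
  have hNdiff : N (U \ u) = 0 :=
    le_antisymm (le_trans (measure_mono fun x hx => hx.2) h2.le) zero_le
  have hPinter : P (U ∩ u) = 0 :=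
    le_antisymm (le_trans (measure_mono Set.inter_subset_right) h1.le) zero_le
  have hPdiff : P (U \ u) = 0 := by
    have hthis := signed_apply_jordan μ hUd
    rw [h _ hUd Set.diff_subset] at hthis
    have hN0 : (N (U \ u)).toReal = 0 := by rw [hNdiff]; simp
    rw [hN0, sub_zero] at hthis
    exact ((ENNReal.toReal_eq_zero_iff _).mp hthis.symm).resolve_right
      (measure_ne_top P _)
  have hNinter : N (U ∩ u) = 0 := by
    have hthis := signed_apply_jordan μ hUu
    rw [h _ hUu Set.inter_subset_left] at hthis
    have hP0 : (P (U ∩ u)).toReal = 0 := by rw [hPinter]; simp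
    rw [hP0, zero_sub, eq_comm, neg_eq_zero] at hthis
    exact ((ENNReal.toReal_eq_zero_iff _).mp hthis).resolve_right (measure_ne_top N _)
  constructor
  · rw [← measure_inter_add_diff U hum, hPinter, hPdiff, add_zero]
  · rw [← measure_inter_add_diff U hum, hNinter, hNdiff, add_zero]

/-- main reduction: sInt of a signed-measure-valued section as product measures -/
lemma sInt_eq_prod (ν μ : SignedMeasure α) {S : Set α} (hS : MeasurableSet S) {F : α → Set α}
    (hF : ∀ x, MeasurableSet (F x))
    (hC : MeasurableSet {p : α × α | p.1 ∈ S ∧ p.2 ∈ F p.1}) :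
    sInt ν S (fun x => μ (F x)) =
      ((ν.toJordanDecomposition.posPart.prod μ.toJordanDecomposition.posPart)
          {p : α × α | p.1 ∈ S ∧ p.2 ∈ F p.1}).toReal
      - ((ν.toJordanDecomposition.posPart.prod μ.toJordanDecomposition.negPart)
          {p : α × α | p.1 ∈ S ∧ p.2 ∈ F p.1}).toReal
      - ((ν.toJordanDecomposition.negPart.prod μ.toJordanDecomposition.posPart)
          {p : α × α | p.1 ∈ S ∧ p.2 ∈ F p.1}).toReal
      + ((ν.toJordanDecomposition.negPart.prod μ.toJordanDecomposition.negPart)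
          {p : α × α | p.1 ∈ S ∧ p.2 ∈ F p.1}).toReal := by
  set C := {p : α × α | p.1 ∈ S ∧ p.2 ∈ F p.1} with hCdef
  set Pμ := μ.toJordanDecomposition.posPart
  set Nμ := μ.toJordanDecomposition.negPart
  have key : ∀ (σ : Measure α) [IsFiniteMeasure σ],
      ∫ x in S, μ (F x) ∂σ = ((σ.prod Pμ) C).toReal - ((σ.prod Nμ) C).toReal := by
    intro σ _
    have hptw : S.indicator (fun x => μ (F x)) = fun x =>
        (Pμ (Prod.mk x ⁻¹' C)).toReal - (Nμ (Prod.mk x ⁻¹' C)).toReal := by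
      funext x
      by_cases hx : x ∈ S
      · have hsl : Prod.mk x ⁻¹' C = F x := by
          ext y; simp [hCdef, hx]
        rw [Set.indicator_of_mem hx, hsl, signed_apply_jordan μ (hF x)]
      · have hsl : Prod.mk x ⁻¹' C = ∅ := by
          ext y; simp [hCdef, hx]
        rw [Set.indicator_of_notMem hx, hsl]
        simp
    rw [← integral_indicator hS, hptw,
      integral_sub (integ_slice σ Pμ hC) (integ_slice σ Nμ hC),
      prod_apply_toReal σ Pμ hC, prod_apply_toReal σ Nμ hC]
  rw [sInt, key ν.toJordanDecomposition.posPart, key ν.toJordanDecomposition.negPart]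
  ring

lemma prod_swap_apply (σ ρ : Measure α) [IsFiniteMeasure σ] [IsFiniteMeasure ρ]
    {A : Set (α × α)} (hA : MeasurableSet A) :
    (ρ.prod σ) A = (σ.prod ρ) (Prod.swap ⁻¹' A) := by
  rw [← Measure.prod_swap, Measure.map_apply measurable_swap hA]

end Aux

section Dim

variable {d : ℕ}

private lemma meas_forall_mem {β : Type*} [MeasurableSpace β] (s : Finset (Fin d))
    (P : Fin d → Set β) (hP : ∀ j, MeasurableSet (P j)) :
    MeasurableSet {x | ∀ j ∈ s, x ∈ P j} := by
  have : {x | ∀ j ∈ s, x ∈ P j} = ⋂ j ∈ s, P j := by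
    ext x; simp
  rw [this]
  exact MeasurableSet.biInter s.countable_toSet fun j _ => hP j

private lemma coord_ident (aj yj zj : ℝ) (hy : aj ≤ yj) (hz : aj ≤ zj) :
    (if yj ≤ zj ∧ aj < zj then (1:ℝ) else 0) =
      1 - (if zj < yj then (1:ℝ) else 0) -
        (if yj ≤ aj ∧ zj ≤ aj then (1:ℝ) else 0) := by
  by_cases h2 : zj < yj
  · have h3 : ¬ (yj ≤ aj ∧ zj ≤ aj) := by
      rintro ⟨ha, hb⟩; linarith
    have h1 : ¬ (yj ≤ zj ∧ aj < zj) := by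
      rintro ⟨ha, hb⟩; linarith
    simp [h1, h2, h3]
  · push_neg at h2
    by_cases h4 : aj < zj
    · have h1 : yj ≤ zj ∧ aj < zj := ⟨h2, h4⟩
      have h3 : ¬ (yj ≤ aj ∧ zj ≤ aj) := by
        rintro ⟨ha, hb⟩; linarith
      simp [h1, h3, not_lt.2 h2]
    · push_neg at h4
      have h1 : ¬ (yj ≤ zj ∧ aj < zj) := by
        rintro ⟨ha, hb⟩; linarith
      have h3 : yj ≤ aj ∧ zj ≤ aj := ⟨le_trans h2 h4, h4⟩
      simp [h1, h3, not_lt.2 h2]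


private lemma meas_A (a b : Fin d → ℝ) :
    MeasurableSet {p : (Fin d → ℝ) × (Fin d → ℝ) |
      (∀ j, p.2 j ∈ Set.Ioc (a j) (b j)) ∧ p.1 ∈ Set.Icc a p.2} := by
  have e : {p : (Fin d → ℝ) × (Fin d → ℝ) |
      (∀ j, p.2 j ∈ Set.Ioc (a j) (b j)) ∧ p.1 ∈ Set.Icc a p.2} =
      {p : (Fin d → ℝ) × (Fin d → ℝ) | ∀ j, (a j < p.2 j ∧ p.2 j ≤ b j) ∧
        a j ≤ p.1 j ∧ p.1 j ≤ p.2 j} := by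
    ext p
    simp only [Set.mem_setOf_eq, Set.mem_Ioc, Set.mem_Icc, Pi.le_def]
    constructor
    · rintro ⟨h1, h2, h3⟩ j; exact ⟨h1 j, h2 j, h3 j⟩
    · intro h; exact ⟨fun j => (h j).1, fun j => (h j).2.1, fun j => (h j).2.2⟩
  rw [e, Set.setOf_forall]
  refine MeasurableSet.iInter fun j => ?_
  have m1 : Measurable fun p : (Fin d → ℝ) × (Fin d → ℝ) => p.1 j :=
    (measurable_pi_apply j).comp measurable_fst
  have m2 : Measurable fun p : (Fin d → ℝ) × (Fin d → ℝ) => p.2 j :=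
    (measurable_pi_apply j).comp measurable_snd
  exact (((measurableSet_lt measurable_const m2).inter
    (measurableSet_le m2 measurable_const)).inter
    ((measurableSet_le measurable_const m1).inter (measurableSet_le m1 m2)))

private lemma meas_B (a b : Fin d → ℝ) (I₁ I₂ : Finset (Fin d)) :
    MeasurableSet {p : (Fin d → ℝ) × (Fin d → ℝ) |
      ((∀ j ∈ I₁, p.1 j ∈ Set.Ioc (a j) (b j)) ∧
         ∀ j ∉ I₁, p.1 j ≤ if j ∈ I₂ then a j else b j) ∧
      (∀ j ∈ I₁, p.2 j < p.1 j) ∧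
         ∀ j ∉ I₁, p.2 j ≤ if j ∈ I₂ then a j else b j} := by
  have m1 : ∀ j, Measurable fun p : (Fin d → ℝ) × (Fin d → ℝ) => p.1 j :=
    fun j => (measurable_pi_apply j).comp measurable_fst
  have m2 : ∀ j, Measurable fun p : (Fin d → ℝ) × (Fin d → ℝ) => p.2 j :=
    fun j => (measurable_pi_apply j).comp measurable_snd
  have e : {p : (Fin d → ℝ) × (Fin d → ℝ) |
      ((∀ j ∈ I₁, p.1 j ∈ Set.Ioc (a j) (b j)) ∧
         ∀ j ∉ I₁, p.1 j ≤ if j ∈ I₂ then a j else b j) ∧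
      (∀ j ∈ I₁, p.2 j < p.1 j) ∧
         ∀ j ∉ I₁, p.2 j ≤ if j ∈ I₂ then a j else b j} =
      {p : (Fin d → ℝ) × (Fin d → ℝ) | ∀ j, (j ∈ I₁ → (a j < p.1 j ∧ p.1 j ≤ b j) ∧
        p.2 j < p.1 j) ∧ (j ∉ I₁ → p.1 j ≤ (if j ∈ I₂ then a j else b j) ∧
        p.2 j ≤ (if j ∈ I₂ then a j else b j))} := by
    ext p
    simp only [Set.mem_setOf_eq, Set.mem_Ioc]
    constructor
    · rintro ⟨⟨h1, h2⟩, h3, h4⟩ j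
      exact ⟨fun hj => ⟨h1 j hj, h3 j hj⟩, fun hj => ⟨h2 j hj, h4 j hj⟩⟩
    · intro h
      exact ⟨⟨fun j hj => ((h j).1 hj).1, fun j hj => ((h j).2 hj).1⟩,
        fun j hj => ((h j).1 hj).2, fun j hj => ((h j).2 hj).2⟩
  rw [e, Set.setOf_forall]
  refine MeasurableSet.iInter fun j => ?_
  have mconcrete : MeasurableSet {p : (Fin d → ℝ) × (Fin d → ℝ) |
      ((a j < p.1 j ∧ p.1 j ≤ b j) ∧ p.2 j < p.1 j)} :=
    ((measurableSet_lt measurable_const (m1 j)).inter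
      (measurableSet_le (m1 j) measurable_const)).inter
      (measurableSet_lt (m2 j) (m1 j))
  have mconcrete2 : MeasurableSet {p : (Fin d → ℝ) × (Fin d → ℝ) |
      p.1 j ≤ (if j ∈ I₂ then a j else b j) ∧
        p.2 j ≤ (if j ∈ I₂ then a j else b j)} :=
    (measurableSet_le (m1 j) measurable_const).inter
      (measurableSet_le (m2 j) measurable_const)
  by_cases hj : j ∈ I₁
  · exact mconcrete.congr (by ext p; simp [hj])
  · exact mconcrete2.congr (by ext p; simp [hj])

private lemma meas_S' (a b : Fin d → ℝ) (I₁ I₂ : Finset (Fin d)) :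
    MeasurableSet {y : Fin d → ℝ | (∀ j ∈ I₁, y j ∈ Set.Ioc (a j) (b j)) ∧
      ∀ j ∉ I₁, y j ≤ if j ∈ I₂ then a j else b j} := by
  have m1 : ∀ j, Measurable fun y : Fin d → ℝ => y j := fun j => measurable_pi_apply j
  have e : {y : Fin d → ℝ | (∀ j ∈ I₁, y j ∈ Set.Ioc (a j) (b j)) ∧
      ∀ j ∉ I₁, y j ≤ if j ∈ I₂ then a j else b j} =
      {y : Fin d → ℝ | ∀ j, (j ∈ I₁ → a j < y j ∧ y j ≤ b j) ∧
        (j ∉ I₁ → y j ≤ (if j ∈ I₂ then a j else b j))} := by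
    ext y
    simp only [Set.mem_setOf_eq, Set.mem_Ioc]
    constructor
    · rintro ⟨h1, h2⟩ j; exact ⟨h1 j, h2 j⟩
    · intro h; exact ⟨fun j => (h j).1, fun j => (h j).2⟩
  rw [e, Set.setOf_forall]
  refine MeasurableSet.iInter fun j => ?_
  have mc1 : MeasurableSet {y : Fin d → ℝ | a j < y j ∧ y j ≤ b j} :=
    (measurableSet_lt measurable_const (m1 j)).inter
      (measurableSet_le (m1 j) measurable_const)
  have mc2 : MeasurableSet {y : Fin d → ℝ | y j ≤ (if j ∈ I₂ then a j else b j)} :=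
    measurableSet_le (m1 j) measurable_const
  by_cases hj : j ∈ I₁
  · exact mc1.congr (by ext y; simp [hj])
  · exact mc2.congr (by ext y; simp [hj])

private lemma meas_T (a b : Fin d → ℝ) (I₁ I₂ : Finset (Fin d)) (y : Fin d → ℝ) :
    MeasurableSet {z : Fin d → ℝ | (∀ j ∈ I₁, z j < y j) ∧
      ∀ j ∉ I₁, z j ≤ if j ∈ I₂ then a j else b j} := by
  have m1 : ∀ j, Measurable fun z : Fin d → ℝ => z j := fun j => measurable_pi_apply j
  have e : {z : Fin d → ℝ | (∀ j ∈ I₁, z j < y j) ∧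
      ∀ j ∉ I₁, z j ≤ if j ∈ I₂ then a j else b j} =
      {z : Fin d → ℝ | ∀ j, (j ∈ I₁ → z j < y j) ∧
        (j ∉ I₁ → z j ≤ (if j ∈ I₂ then a j else b j))} := by
    ext z
    simp only [Set.mem_setOf_eq]
    constructor
    · rintro ⟨h1, h2⟩ j; exact ⟨h1 j, h2 j⟩
    · intro h; exact ⟨fun j => (h j).1, fun j => (h j).2⟩
  rw [e, Set.setOf_forall]
  refine MeasurableSet.iInter fun j => ?_
  have mc1 : MeasurableSet {z : Fin d → ℝ | z j < y j} :=
    measurableSet_lt (m1 j) measurable_const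
  have mc2 : MeasurableSet {z : Fin d → ℝ | z j ≤ (if j ∈ I₂ then a j else b j)} :=
    measurableSet_le (m1 j) measurable_const
  by_cases hj : j ∈ I₁
  · exact mc1.congr (by ext z; simp [hj])
  · exact mc2.congr (by ext z; simp [hj])

lemma prod_null_compl {β : Type*} [MeasurableSpace β] (X Y : Measure β)
    [SFinite X] [SFinite Y] {s t : Set β} (hX : X sᶜ = 0) (hY : Y tᶜ = 0) :
    (X.prod Y) ((s ×ˢ t)ᶜ) = 0 := by
  have hsub : (s ×ˢ t)ᶜ ⊆ (sᶜ ×ˢ (Set.univ : Set β)) ∪ ((Set.univ : Set β) ×ˢ tᶜ) := by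
    intro p hp
    simp only [Set.mem_compl_iff, Set.mem_prod, Set.mem_univ, and_true, true_and,
      Set.mem_union, not_and_or] at hp ⊢
    tauto
  refine le_antisymm ?_ zero_le
  calc (X.prod Y) ((s ×ˢ t)ᶜ)
      ≤ (X.prod Y) (sᶜ ×ˢ (Set.univ : Set β)) + (X.prod Y) ((Set.univ : Set β) ×ˢ tᶜ) :=
        le_trans (measure_mono hsub) (measure_union_le _ _)
  _ = 0 := by rw [Measure.prod_prod, Measure.prod_prod, hX, hY, zero_mul, mul_zero, add_zero]

/-- The core combinatorial identity at the level of a single finite measure on the product. -/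
lemma core_identity (a b : Fin d → ℝ) (ρ : Measure ((Fin d → ℝ) × (Fin d → ℝ)))
    [IsFiniteMeasure ρ]
    (hρ : ρ ((Set.Icc a b ×ˢ Set.Icc a b)ᶜ) = 0) :
    (ρ {p : (Fin d → ℝ) × (Fin d → ℝ) |
        (∀ j, p.2 j ∈ Set.Ioc (a j) (b j)) ∧ p.1 ∈ Set.Icc a p.2}).toReal =
      ∑ I₁ : Finset (Fin d), ∑ I₂ ∈ I₁ᶜ.powerset,
        (-1 : ℝ) ^ (I₁.card + I₂.card) *
          (ρ {p : (Fin d → ℝ) × (Fin d → ℝ) |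
              ((∀ j ∈ I₁, p.1 j ∈ Set.Ioc (a j) (b j)) ∧
                 ∀ j ∉ I₁, p.1 j ≤ if j ∈ I₂ then a j else b j) ∧
              (∀ j ∈ I₁, p.2 j < p.1 j) ∧
                 ∀ j ∉ I₁, p.2 j ≤ if j ∈ I₂ then a j else b j}).toReal := by
  classical
  set K : Set ((Fin d → ℝ) × (Fin d → ℝ)) := Set.Icc a b ×ˢ Set.Icc a b with hKdef
  have hK : MeasurableSet K := (measurableSet_Icc).prod measurableSet_Icc
  set A : Set ((Fin d → ℝ) × (Fin d → ℝ)) := {p | (∀ j, p.2 j ∈ Set.Ioc (a j) (b j)) ∧ p.1 ∈ Set.Icc a p.2}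
    with hAdef
  set B : Finset (Fin d) → Finset (Fin d) → Set ((Fin d → ℝ) × (Fin d → ℝ)) := fun I₁ I₂ =>
    {p | ((∀ j ∈ I₁, p.1 j ∈ Set.Ioc (a j) (b j)) ∧
            ∀ j ∉ I₁, p.1 j ≤ if j ∈ I₂ then a j else b j) ∧
          (∀ j ∈ I₁, p.2 j < p.1 j) ∧
            ∀ j ∉ I₁, p.2 j ≤ if j ∈ I₂ then a j else b j} with hBdef
  have hA : MeasurableSet A := meas_A a b
  have hB : ∀ I₁ I₂, MeasurableSet (B I₁ I₂) := fun I₁ I₂ => meas_B a b I₁ I₂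
  -- reduce to restricted measure
  have hres : ∀ s : Set ((Fin d → ℝ) × (Fin d → ℝ)), MeasurableSet s → ρ s = ρ.restrict K s := by
    intro s hs
    rw [Measure.restrict_apply hs]
    refine le_antisymm ?_ (measure_mono Set.inter_subset_left)
    calc ρ s ≤ ρ (s ∩ K) + ρ (s \ K) := measure_le_inter_add_diff ρ s K
    _ ≤ ρ (s ∩ K) + ρ Kᶜ := by gcongr; exact fun x hx => hx.2
    _ = ρ (s ∩ K) := by rw [hρ, add_zero]
  -- indicator functions
  set u : ((Fin d → ℝ) × (Fin d → ℝ)) → Fin d → ℝ :=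
    fun p j => if p.2 j < p.1 j then 1 else 0 with hu
  set v : ((Fin d → ℝ) × (Fin d → ℝ)) → Fin d → ℝ := fun p j =>
    if p.1 j ≤ a j ∧ p.2 j ≤ a j then 1 else 0 with hv
  have hptA : ∀ p ∈ K, A.indicator (1 : ((Fin d → ℝ) × (Fin d → ℝ)) → ℝ) p = ∏ j, (1 - u p j - v p j) := by
    rintro ⟨y, z⟩ hp
    obtain ⟨⟨hy1, hy2⟩, hz1, hz2⟩ : (a ≤ y ∧ y ≤ b) ∧ a ≤ z ∧ z ≤ b := hp
    have hmem : (y, z) ∈ A ↔ ∀ j, y j ≤ z j ∧ a j < z j := by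
      simp only [hAdef, Set.mem_setOf_eq, Set.mem_Ioc, Set.mem_Icc, Pi.le_def]
      constructor
      · rintro ⟨h1, _, h3⟩ j; exact ⟨h3 j, (h1 j).1⟩
      · intro h
        exact ⟨fun j => ⟨(h j).2, hz2 j⟩, fun j => hy1 j, fun j => (h j).1⟩
    have hfac : ∀ j, (1 : ℝ) - u (y, z) j - v (y, z) j =
        if y j ≤ z j ∧ a j < z j then 1 else 0 :=
      fun j => (coord_ident (a j) (y j) (z j) (hy1 j) (hz1 j)).symm
    rw [Set.indicator_apply]
    by_cases hm : (y, z) ∈ A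
    · rw [if_pos hm]
      have hall := hmem.mp hm
      exact (Finset.prod_eq_one fun j _ => by
        show (1 : ℝ) - u (y, z) j - v (y, z) j = 1
        rw [hfac j, if_pos (hall j)]).symm
    · rw [if_neg hm]
      have hnall : ¬ ∀ j, y j ≤ z j ∧ a j < z j := fun h => hm (hmem.mpr h)
      obtain ⟨j0, hj0⟩ := not_forall.mp hnall
      exact (Finset.prod_eq_zero (Finset.mem_univ j0) (by
        show (1 : ℝ) - u (y, z) j0 - v (y, z) j0 = 0
        rw [hfac j0, if_neg hj0])).symm
  have hptB : ∀ I₁ I₂, I₂ ∈ I₁ᶜ.powerset → ∀ p ∈ K,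
      (B I₁ I₂).indicator (1 : ((Fin d → ℝ) × (Fin d → ℝ)) → ℝ) p =
        (∏ j ∈ I₁, u p j) * ∏ j ∈ I₂, v p j := by
    intro I₁ I₂ hI₂ p hp
    obtain ⟨y, z⟩ := p
    obtain ⟨⟨hy1, hy2⟩, hz1, hz2⟩ : (a ≤ y ∧ y ≤ b) ∧ a ≤ z ∧ z ≤ b := hp
    have hsub : ∀ j ∈ I₂, j ∉ I₁ := by
      intro j hj
      have := Finset.mem_powerset.mp hI₂ hj
      simpa [Finset.mem_compl] using this
    have hmem : (y, z) ∈ B I₁ I₂ ↔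
        (∀ j ∈ I₁, z j < y j) ∧ ∀ j ∈ I₂, y j ≤ a j ∧ z j ≤ a j := by
      simp only [hBdef, Set.mem_setOf_eq, Set.mem_Ioc]
      constructor
      · rintro ⟨⟨h1, h2⟩, h3, h4⟩
        refine ⟨h3, fun j hj => ?_⟩
        have hj1 := hsub j hj
        constructor
        · have := h2 j hj1; simpa [hj] using this
        · have := h4 j hj1; simpa [hj] using this
      · rintro ⟨h1, h2⟩
        refine ⟨⟨fun j hj => ⟨lt_of_le_of_lt (hz1 j) (h1 j hj), hy2 j⟩, fun j hj => ?_⟩,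
          h1, fun j hj => ?_⟩
        · by_cases hj2 : j ∈ I₂
          · simp only [hj2, if_pos]; exact (h2 j hj2).1
          · simp only [hj2, if_neg, if_false]; exact hy2 j
        · by_cases hj2 : j ∈ I₂
          · simp only [hj2, if_pos]; exact (h2 j hj2).2
          · simp only [hj2, if_neg, if_false]; exact hz2 j
    rw [Set.indicator_apply]
    by_cases hm : (y, z) ∈ B I₁ I₂
    · rw [if_pos hm]
      obtain ⟨h1, h2⟩ := hmem.mp hm
      have e1 : (∏ j ∈ I₁, u (y, z) j) = 1 :=
        Finset.prod_eq_one fun j hj => if_pos (h1 j hj)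
      have e2 : (∏ j ∈ I₂, v (y, z) j) = 1 :=
        Finset.prod_eq_one fun j hj => if_pos (h2 j hj)
      rw [e1, e2, mul_one]
      rfl
    · rw [if_neg hm]
      have hn : ¬ ((∀ j ∈ I₁, z j < y j) ∧ ∀ j ∈ I₂, y j ≤ a j ∧ z j ≤ a j) :=
        fun h => hm (hmem.mpr h)
      rcases not_and_or.mp hn with h | h
      · push_neg at h
        obtain ⟨j0, hj0, hnp⟩ := h
        have hz0 : u (y, z) j0 = 0 := by simp [hu, not_lt.mpr hnp]
        rw [Finset.prod_eq_zero hj0 hz0, zero_mul]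
      · push_neg at h
        obtain ⟨j0, hj0, hnp⟩ := h
        have : v (y, z) j0 = 0 := by
          by_cases hc : y j0 ≤ a j0
          · exact if_neg fun hcon => absurd hcon.2 (not_le.mpr (hnp hc))
          · exact if_neg fun hcon => absurd hcon.1 hc
        rw [Finset.prod_eq_zero hj0 this, mul_zero]
  -- now compute
  have hAK : ρ A = ρ.restrict K A := hres A hA
  have hBK : ∀ I₁ I₂, ρ (B I₁ I₂) = ρ.restrict K (B I₁ I₂) := fun I₁ I₂ => hres _ (hB I₁ I₂)
  rw [hAK]
  change (ρ.restrict K).real A = _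
  rw [← integral_indicator_one (μ := ρ.restrict K) hA]
  have rhs_eq : ∀ I₁ I₂ : Finset (Fin d), (ρ (B I₁ I₂)).toReal =
      ∫ p, (B I₁ I₂).indicator (1 : ((Fin d → ℝ) × (Fin d → ℝ)) → ℝ) p ∂(ρ.restrict K) := by
    intro I₁ I₂
    rw [hBK I₁ I₂]; exact (integral_indicator_one (hB I₁ I₂)).symm
  change _ = ∑ I₁ : Finset (Fin d), ∑ I₂ ∈ I₁ᶜ.powerset,
      (-1 : ℝ) ^ (I₁.card + I₂.card) * (ρ (B I₁ I₂)).toReal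
  simp_rw [rhs_eq]
  -- move sums inside the integral
  have hint : ∀ I₁ I₂ : Finset (Fin d),
      Integrable (fun p => (-1 : ℝ) ^ (I₁.card + I₂.card) *
        (B I₁ I₂).indicator (1 : ((Fin d → ℝ) × (Fin d → ℝ)) → ℝ) p) (ρ.restrict K) := by
    intro I₁ I₂
    exact ((integrable_const (1:ℝ)).indicator (hB I₁ I₂)).const_mul _
  have sum_int : ∑ I₁ : Finset (Fin d), ∑ I₂ ∈ I₁ᶜ.powerset,
      (-1 : ℝ) ^ (I₁.card + I₂.card) *
        ∫ p, (B I₁ I₂).indicator (1 : ((Fin d → ℝ) × (Fin d → ℝ)) → ℝ) p ∂(ρ.restrict K) =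
      ∫ p, (∑ I₁ : Finset (Fin d), ∑ I₂ ∈ I₁ᶜ.powerset,
        (-1 : ℝ) ^ (I₁.card + I₂.card) *
          (B I₁ I₂).indicator (1 : ((Fin d → ℝ) × (Fin d → ℝ)) → ℝ) p) ∂(ρ.restrict K) := by
    rw [integral_finset_sum]
    · refine Finset.sum_congr rfl fun I₁ _ => ?_
      rw [integral_finset_sum _ (fun I₂ _ => hint I₁ I₂)]
      refine Finset.sum_congr rfl fun I₂ _ => ?_
      rw [integral_const_mul]
    · intro I₁ _
      exact MeasureTheory.integrable_finset_sum _ (fun I₂ _ => hint I₁ I₂)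
  rw [sum_int]
  refine integral_congr_ae ?_
  filter_upwards [ae_restrict_mem hK] with p hp
  rw [hptA p hp, ibp_expand (u p) (v p)]
  refine Finset.sum_congr rfl fun I₁ _ => Finset.sum_congr rfl fun I₂ hI₂ => ?_
  rw [hptB I₁ I₂ hI₂ p hp]

end Dim

theorem ibp_multivariate (d : ℕ) (hd : 1 ≤ d) (a b : Fin d → ℝ) (hab : ∀ j, a j < b j)
    (μ ν : MeasureTheory.SignedMeasure (Fin d → ℝ))
    (hμ : ∀ E : Set (Fin d → ℝ), MeasurableSet E → E ⊆ (Set.Icc a b)ᶜ → μ E = 0)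
    (hν : ∀ E : Set (Fin d → ℝ), MeasurableSet E → E ⊆ (Set.Icc a b)ᶜ → ν E = 0) :
    sInt ν {y | ∀ j, y j ∈ Set.Ioc (a j) (b j)} (fun x => μ (Set.Icc a x)) =
      ∑ I₁ : Finset (Fin d), ∑ I₂ ∈ I₁ᶜ.powerset,
        (-1 : ℝ) ^ (I₁.card + I₂.card) *
          sInt μ
            {y | (∀ j ∈ I₁, y j ∈ Set.Ioc (a j) (b j)) ∧
                 ∀ j ∉ I₁, y j ≤ if j ∈ I₂ then a j else b j}
            (fun y => ν {z | (∀ j ∈ I₁, z j < y j) ∧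
                 ∀ j ∉ I₁, z j ≤ if j ∈ I₂ then a j else b j}) := by
  classical
  set Pμ := μ.toJordanDecomposition.posPart with hPμ
  set Nμ := μ.toJordanDecomposition.negPart with hNμ
  set Pν := ν.toJordanDecomposition.posPart with hPν
  set Nν := ν.toJordanDecomposition.negPart with hNν
  set A : Set ((Fin d → ℝ) × (Fin d → ℝ)) :=
    {p | (∀ j, p.2 j ∈ Set.Ioc (a j) (b j)) ∧ p.1 ∈ Set.Icc a p.2} with hAdef
  set Bf : Finset (Fin d) → Finset (Fin d) → Set ((Fin d → ℝ) × (Fin d → ℝ)) := fun I₁ I₂ =>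
    {p | ((∀ j ∈ I₁, p.1 j ∈ Set.Ioc (a j) (b j)) ∧
            ∀ j ∉ I₁, p.1 j ≤ if j ∈ I₂ then a j else b j) ∧
          (∀ j ∈ I₁, p.2 j < p.1 j) ∧
            ∀ j ∉ I₁, p.2 j ≤ if j ∈ I₂ then a j else b j} with hBdef
  have hA : MeasurableSet A := meas_A a b
  have hB : ∀ I₁ I₂, MeasurableSet (Bf I₁ I₂) := fun I₁ I₂ => meas_B a b I₁ I₂
  -- null on complement of the box
  have hμ0 := jordan_parts_null μ measurableSet_Icc.compl hμ
  have hν0 := jordan_parts_null ν measurableSet_Icc.compl hν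
  have hnullPP : (Pμ.prod Pν) ((Set.Icc a b ×ˢ Set.Icc a b)ᶜ) = 0 :=
    prod_null_compl _ _ hμ0.1 hν0.1
  have hnullPN : (Pμ.prod Nν) ((Set.Icc a b ×ˢ Set.Icc a b)ᶜ) = 0 :=
    prod_null_compl _ _ hμ0.1 hν0.2
  have hnullNP : (Nμ.prod Pν) ((Set.Icc a b ×ˢ Set.Icc a b)ᶜ) = 0 :=
    prod_null_compl _ _ hμ0.2 hν0.1
  have hnullNN : (Nμ.prod Nν) ((Set.Icc a b ×ˢ Set.Icc a b)ᶜ) = 0 :=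
    prod_null_compl _ _ hμ0.2 hν0.2
  -- core identities
  have cPP := core_identity a b (Pμ.prod Pν) hnullPP
  have cPN := core_identity a b (Pμ.prod Nν) hnullPN
  have cNP := core_identity a b (Nμ.prod Pν) hnullNP
  have cNN := core_identity a b (Nμ.prod Nν) hnullNN
  -- LHS
  have hS₀ : MeasurableSet {y : Fin d → ℝ | ∀ j, y j ∈ Set.Ioc (a j) (b j)} := by
    rw [Set.setOf_forall]
    exact MeasurableSet.iInter fun j => (measurable_pi_apply j) measurableSet_Ioc
  have hswapA : Prod.swap ⁻¹' A =
      {p : (Fin d → ℝ) × (Fin d → ℝ) |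
        p.1 ∈ {y : Fin d → ℝ | ∀ j, y j ∈ Set.Ioc (a j) (b j)} ∧
        p.2 ∈ Set.Icc a p.1} := rfl
  have hC₀ : MeasurableSet {p : (Fin d → ℝ) × (Fin d → ℝ) |
      p.1 ∈ {y : Fin d → ℝ | ∀ j, y j ∈ Set.Ioc (a j) (b j)} ∧
      p.2 ∈ Set.Icc a p.1} := by
    rw [← hswapA]; exact hA.preimage measurable_swap
  have eL := sInt_eq_prod ν μ hS₀ (F := fun x => Set.Icc a x)
    (fun x => measurableSet_Icc) hC₀
  -- swap the product measures on the LHS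
  have hswap : ∀ (X Y : Measure (Fin d → ℝ)) [IsFiniteMeasure X] [IsFiniteMeasure Y],
      (Y.prod X) {p : (Fin d → ℝ) × (Fin d → ℝ) |
        p.1 ∈ {y : Fin d → ℝ | ∀ j, y j ∈ Set.Ioc (a j) (b j)} ∧
        p.2 ∈ Set.Icc a p.1} = (X.prod Y) A := by
    intro X Y _ _
    rw [prod_swap_apply Y X hA, hswapA]
  rw [eL, hswap Pμ Pν, hswap Nμ Pν, hswap Pμ Nν, hswap Nμ Nν]
  -- RHS terms
  have eR : ∀ I₁ I₂ : Finset (Fin d),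
      sInt μ {y | (∀ j ∈ I₁, y j ∈ Set.Ioc (a j) (b j)) ∧
                 ∀ j ∉ I₁, y j ≤ if j ∈ I₂ then a j else b j}
        (fun y => ν {z | (∀ j ∈ I₁, z j < y j) ∧
                 ∀ j ∉ I₁, z j ≤ if j ∈ I₂ then a j else b j}) =
      ((Pμ.prod Pν) (Bf I₁ I₂)).toReal - ((Pμ.prod Nν) (Bf I₁ I₂)).toReal -
        ((Nμ.prod Pν) (Bf I₁ I₂)).toReal + ((Nμ.prod Nν) (Bf I₁ I₂)).toReal := by
    intro I₁ I₂
    have hCeq : {p : (Fin d → ℝ) × (Fin d → ℝ) |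
        p.1 ∈ {y : Fin d → ℝ | (∀ j ∈ I₁, y j ∈ Set.Ioc (a j) (b j)) ∧
                 ∀ j ∉ I₁, y j ≤ if j ∈ I₂ then a j else b j} ∧
        p.2 ∈ {z : Fin d → ℝ | (∀ j ∈ I₁, z j < p.1 j) ∧
                 ∀ j ∉ I₁, z j ≤ if j ∈ I₂ then a j else b j}} = Bf I₁ I₂ := rfl
    have := sInt_eq_prod μ ν (meas_S' a b I₁ I₂)
      (F := fun y => {z : Fin d → ℝ | (∀ j ∈ I₁, z j < y j) ∧
        ∀ j ∉ I₁, z j ≤ if j ∈ I₂ then a j else b j})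
      (fun y => meas_T a b I₁ I₂ y) (hCeq ▸ hB I₁ I₂)
    rw [this, hCeq]
  calc ((Pμ.prod Pν) A).toReal - ((Nμ.prod Pν) A).toReal - ((Pμ.prod Nν) A).toReal
        + ((Nμ.prod Nν) A).toReal
      = ∑ I₁ : Finset (Fin d), ∑ I₂ ∈ I₁ᶜ.powerset,
          (-1 : ℝ) ^ (I₁.card + I₂.card) *
            (((Pμ.prod Pν) (Bf I₁ I₂)).toReal - ((Pμ.prod Nν) (Bf I₁ I₂)).toReal -
              ((Nμ.prod Pν) (Bf I₁ I₂)).toReal + ((Nμ.prod Nν) (Bf I₁ I₂)).toReal) := by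
        rw [cPP, cPN, cNP, cNN]
        rw [← Finset.sum_sub_distrib, ← Finset.sum_sub_distrib, ← Finset.sum_add_distrib]
        refine Finset.sum_congr rfl fun I₁ _ => ?_
        rw [← Finset.sum_sub_distrib, ← Finset.sum_sub_distrib, ← Finset.sum_add_distrib]
        exact Finset.sum_congr rfl fun I₂ _ => by ring
  _ = ∑ I₁ : Finset (Fin d), ∑ I₂ ∈ I₁ᶜ.powerset,
        (-1 : ℝ) ^ (I₁.card + I₂.card) *
          sInt μ
            {y | (∀ j ∈ I₁, y j ∈ Set.Ioc (a j) (b j)) ∧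
                 ∀ j ∉ I₁, y j ≤ if j ∈ I₂ then a j else b j}
            (fun y => ν {z | (∀ j ∈ I₁, z j < y j) ∧
                 ∀ j ∉ I₁, z j ≤ if j ∈ I₂ then a j else b j}) := by
      refine Finset.sum_congr rfl fun I₁ _ => Finset.sum_congr rfl fun I₂ _ => ?_
      rw [eR I₁ I₂]
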